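/- Let h : ℝⁿ → ℝ and g : ℝⁿ → ℝ be continuously differentiable with g and ∇g bounded, and let ψ ∈ C¹_c(ℝ^{n+1}; ℝ^{n+1}). Then ∫_{ℝⁿ} [ ∂_y ψ(x, h(x))ᵀ (−∇h(x), 1) · g(x) + ψ(x, h(x))ᵀ (−∇g(x), 0) ] dx = ∫_{ℝⁿ} div(ψ)(x, h(x)) · g(x) dx, where ∂_y ψ denotes the partial derivative of ψ with respect to the last coordinate of ℝ^{n+1}. -/

import Mathlib

open MeasureTheory
open scoped RealInnerProductSpace

/-- **Lemma 3.17 (`lem:delalph`): integration-by-parts identity on the graph.**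
For `h, g : ℝⁿ → ℝ` continuously differentiable with `g` and `∇g` bounded and
`ψ ∈ C¹_c(ℝ^{n+1}; ℝ^{n+1})`,
`∫ [∂_yψ(x,h(x))ᵀ(−∇h(x),1) g(x) + ψ(x,h(x))ᵀ(−∇g(x),0)] dx = ∫ div(ψ)(x,h(x)) g(x) dx`.
Here `∂_y ψ(p) = Dψ(p)(0,1)` and the divergence is the sum of directional derivatives,
in the model `ℝ^{n+1} = EuclideanSpace ℝ (Fin n) × ℝ`. -/
theorem stmt_7 (n : ℕ)
    (h : EuclideanSpace ℝ (Fin n) → ℝ) (hh : ContDiff ℝ 1 h)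
    (g : EuclideanSpace ℝ (Fin n) → ℝ) (hg : ContDiff ℝ 1 g)
    (hgbd : ∃ C : ℝ, ∀ x, |g x| ≤ C ∧ ‖gradient g x‖ ≤ C)
    (ψ : EuclideanSpace ℝ (Fin n) × ℝ → EuclideanSpace ℝ (Fin n) × ℝ)
    (hψ : ContDiff ℝ 1 ψ) (hψc : HasCompactSupport ψ) :
    (∫ x, ((⟪(fderiv ℝ ψ (x, h x) ((0 : EuclideanSpace ℝ (Fin n)), (1 : ℝ))).1,
              -gradient h x⟫
            + (fderiv ℝ ψ (x, h x) ((0 : EuclideanSpace ℝ (Fin n)), (1 : ℝ))).2) * g x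
          + ⟪(ψ (x, h x)).1, -gradient g x⟫))
      = ∫ x, ((∑ i : Fin n, (fderiv ℝ ψ (x, h x) (EuclideanSpace.single i 1, (0 : ℝ))).1 i)
            + (fderiv ℝ ψ (x, h x) ((0 : EuclideanSpace ℝ (Fin n)), (1 : ℝ))).2) * g x := by
  classical
  have hhd : Differentiable ℝ h := hh.differentiable one_ne_zero
  have hgd : Differentiable ℝ g := hg.differentiable one_ne_zero
  have hψd : Differentiable ℝ ψ := hψ.differentiable one_ne_zero
  set u : Fin n → EuclideanSpace ℝ (Fin n) → ℝ := fun i x => (ψ (x, h x)).1 i with hu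
  -- derivative of u i
  have hui : ∀ (i : Fin n) (x : EuclideanSpace ℝ (Fin n)),
      HasFDerivAt (u i)
        (((EuclideanSpace.proj i).comp (ContinuousLinearMap.fst ℝ _ ℝ)).comp
          ((fderiv ℝ ψ (x, h x)).comp
            ((ContinuousLinearMap.id ℝ _).prod (fderiv ℝ h x)))) x := by
    intro i x
    have h1 : HasFDerivAt (fun x : EuclideanSpace ℝ (Fin n) => (x, h x))
        ((ContinuousLinearMap.id ℝ _).prod (fderiv ℝ h x)) x :=
      HasFDerivAt.prodMk (hasFDerivAt_id x) (hhd x).hasFDerivAt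
    have h2 := (hψd (x, h x)).hasFDerivAt.comp x h1
    exact (((EuclideanSpace.proj i).comp
      (ContinuousLinearMap.fst ℝ _ ℝ)).hasFDerivAt.comp x h2 : _)
  have hsplit : ∀ (p : EuclideanSpace ℝ (Fin n) × ℝ) (v : EuclideanSpace ℝ (Fin n)) (c : ℝ),
      fderiv ℝ ψ p (v, c) = fderiv ℝ ψ p (v, 0) + c • fderiv ℝ ψ p (0, 1) := by
    intro p v c
    have : (v, c) = (v, (0:ℝ)) + c • ((0 : EuclideanSpace ℝ (Fin n)), (1:ℝ)) := by
      simp [Prod.ext_iff]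
    rw [this, map_add, _root_.map_smul]
  have hform : ∀ (i : Fin n) x, fderiv ℝ (u i) x (EuclideanSpace.single i 1)
      = (fderiv ℝ ψ (x, h x) (EuclideanSpace.single i 1, 0)).1 i
        + fderiv ℝ h x (EuclideanSpace.single i 1)
          * (fderiv ℝ ψ (x, h x) ((0 : EuclideanSpace ℝ (Fin n)), (1:ℝ))).1 i := by
    intro i x
    rw [(hui i x).fderiv]
    show (fderiv ℝ ψ (x, h x)
        (EuclideanSpace.single i 1, fderiv ℝ h x (EuclideanSpace.single i 1))).1 i = _
    rw [hsplit]
    simp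
  -- compact support machinery
  set K : Set (EuclideanSpace ℝ (Fin n)) := Prod.fst '' tsupport ψ with hKdef
  have hKc : IsCompact K := hψc.image continuous_fst
  have hnot : ∀ x, x ∉ K → (x, h x) ∉ tsupport ψ := fun x hx hm => hx ⟨(x, h x), hm, rfl⟩
  have hψ0 : ∀ x, x ∉ K → ψ (x, h x) = 0 := fun x hx =>
    image_eq_zero_of_notMem_tsupport (hnot x hx)
  have hdψ0 : ∀ x, x ∉ K → fderiv ℝ ψ (x, h x) = 0 := by
    intro x hx
    by_contra h0
    exact hnot x hx (support_fderiv_subset ℝ (Function.mem_support.2 h0))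
  have integ : ∀ (F : EuclideanSpace ℝ (Fin n) → ℝ), Continuous F →
      (∀ x ∉ K, F x = 0) → Integrable F := fun F hF h0 =>
    hF.integrable_of_hasCompactSupport (HasCompactSupport.intro hKc h0)
  -- continuity facts
  have hcψ : Continuous fun x : EuclideanSpace ℝ (Fin n) => ψ (x, h x) :=
    hψ.continuous.comp (continuous_id.prodMk hh.continuous)
  have hcdψ : Continuous fun x : EuclideanSpace ℝ (Fin n) => fderiv ℝ ψ (x, h x) :=
    (hψ.continuous_fderiv one_ne_zero).comp (continuous_id.prodMk hh.continuous)
  have hcu : ∀ i, Continuous (u i) := fun i =>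
    (EuclideanSpace.proj i).continuous.comp (continuous_fst.comp hcψ)
  have hA : ∀ (v : EuclideanSpace ℝ (Fin n) × ℝ) (i : Fin n),
      Continuous fun x => (fderiv ℝ ψ (x, h x) v).1 i := fun v i =>
    (EuclideanSpace.proj i).continuous.comp
      (continuous_fst.comp (hcdψ.clm_apply continuous_const))
  have hcdu : ∀ i, Continuous fun x => fderiv ℝ (u i) x (EuclideanSpace.single i 1) := by
    intro i
    have : (fun x => fderiv ℝ (u i) x (EuclideanSpace.single i 1))
        = fun x => (fderiv ℝ ψ (x, h x) (EuclideanSpace.single i 1, 0)).1 i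
          + fderiv ℝ h x (EuclideanSpace.single i 1)
            * (fderiv ℝ ψ (x, h x) ((0 : EuclideanSpace ℝ (Fin n)), (1:ℝ))).1 i :=
      funext fun x => hform i x
    rw [this]
    exact (hA _ i).add
      (((hh.continuous_fderiv one_ne_zero).clm_apply continuous_const).mul (hA _ i))
  -- integrability
  have I1 : ∀ i, Integrable fun x => fderiv ℝ g x (EuclideanSpace.single i 1) * u i x := by
    intro i
    refine integ _ (((hg.continuous_fderiv one_ne_zero).clm_apply continuous_const).mul (hcu i)) ?_
    intro x hx
    simp [hu, hψ0 x hx]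
  have I2 : ∀ i, Integrable fun x => g x * fderiv ℝ (u i) x (EuclideanSpace.single i 1) := by
    intro i
    refine integ _ (hg.continuous.mul (hcdu i)) ?_
    intro x hx
    rw [hform i x]
    simp [hdψ0 x hx]
  have I3 : ∀ i, Integrable fun x => g x * u i x := by
    intro i
    refine integ _ (hg.continuous.mul (hcu i)) ?_
    intro x hx
    simp [hu, hψ0 x hx]
  have key : ∀ i, (∫ x, g x * fderiv ℝ (u i) x (EuclideanSpace.single i 1))
      = - ∫ x, fderiv ℝ g x (EuclideanSpace.single i 1) * u i x := fun i =>
    integral_mul_fderiv_eq_neg_fderiv_mul_of_integrable (I1 i) (I2 i) (I3 i) (fun x _ => hgd x)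
      (fun x _ => (hui i x).differentiableAt)
  have Ipair : ∀ i : Fin n, Integrable (fun x =>
      g x * fderiv ℝ (u i) x (EuclideanSpace.single i 1)
        + fderiv ℝ g x (EuclideanSpace.single i 1) * u i x) := fun i =>
    (I2 i).add (I1 i)
  set S : EuclideanSpace ℝ (Fin n) → ℝ := fun x => ∑ i : Fin n,
    (g x * fderiv ℝ (u i) x (EuclideanSpace.single i 1)
      + fderiv ℝ g x (EuclideanSpace.single i 1) * u i x) with hS
  have hSint : Integrable S := integrable_finset_sum _ (fun i _ => Ipair i)
  have hS0 : (∫ x, S x) = 0 := by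
    simp only [hS]
    rw [integral_finset_sum _ (fun i _ => Ipair i)]
    refine Finset.sum_eq_zero fun i _ => ?_
    rw [integral_add (I2 i) (I1 i), key i, neg_add_cancel]
  have IR : Integrable fun x =>
      ((∑ i : Fin n, (fderiv ℝ ψ (x, h x) (EuclideanSpace.single i 1, (0:ℝ))).1 i)
        + (fderiv ℝ ψ (x, h x) ((0 : EuclideanSpace ℝ (Fin n)), (1:ℝ))).2) * g x := by
    refine integ _ ?_ ?_
    · exact ((continuous_finset_sum _ fun i _ => hA _ i).add
        (continuous_snd.comp (hcdψ.clm_apply continuous_const))).mul hg.continuous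
    · intro x hx
      simp [hdψ0 x hx]
  -- gradient facts
  have inner_grad : ∀ (f : EuclideanSpace ℝ (Fin n) → ℝ) x (v : EuclideanSpace ℝ (Fin n)),
      ⟪gradient f x, v⟫ = fderiv ℝ f x v := fun f x v =>
    InnerProductSpace.toDual_symm_apply
  have hgrad_apply : ∀ (f : EuclideanSpace ℝ (Fin n) → ℝ) x (i : Fin n),
      gradient f x i = fderiv ℝ f x (EuclideanSpace.single i 1) := by
    intro f x i
    rw [← inner_grad f x (EuclideanSpace.single i 1), real_inner_comm,
      EuclideanSpace.inner_single_left]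
    simp
  -- pointwise identity
  have point : ∀ x,
      (⟪(fderiv ℝ ψ (x, h x) ((0 : EuclideanSpace ℝ (Fin n)), (1 : ℝ))).1,
          -gradient h x⟫
        + (fderiv ℝ ψ (x, h x) ((0 : EuclideanSpace ℝ (Fin n)), (1 : ℝ))).2) * g x
        + ⟪(ψ (x, h x)).1, -gradient g x⟫
      = ((∑ i : Fin n, (fderiv ℝ ψ (x, h x) (EuclideanSpace.single i 1, (0 : ℝ))).1 i)
          + (fderiv ℝ ψ (x, h x) ((0 : EuclideanSpace ℝ (Fin n)), (1 : ℝ))).2) * g x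
        - S x := by
    intro x
    have e1 : ⟪(fderiv ℝ ψ (x, h x) ((0 : EuclideanSpace ℝ (Fin n)), (1 : ℝ))).1,
          -gradient h x⟫
        = -∑ i : Fin n,
            (fderiv ℝ ψ (x, h x) ((0 : EuclideanSpace ℝ (Fin n)), (1:ℝ))).1 i
              * fderiv ℝ h x (EuclideanSpace.single i 1) := by
      rw [PiLp.inner_apply, ← Finset.sum_neg_distrib]
      refine Finset.sum_congr rfl fun i _ => ?_
      rw [← hgrad_apply h x i]
      simp [mul_comm]
    have e2 : ⟪(ψ (x, h x)).1, -gradient g x⟫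
        = -∑ i : Fin n, (ψ (x, h x)).1 i * fderiv ℝ g x (EuclideanSpace.single i 1) := by
      rw [PiLp.inner_apply, ← Finset.sum_neg_distrib]
      refine Finset.sum_congr rfl fun i _ => ?_
      rw [← hgrad_apply g x i]
      simp [mul_comm]
    have hSx : S x = g x * (∑ i : Fin n,
          (fderiv ℝ ψ (x, h x) (EuclideanSpace.single i 1, (0:ℝ))).1 i)
        + g x * (∑ i : Fin n,
            (fderiv ℝ ψ (x, h x) ((0 : EuclideanSpace ℝ (Fin n)), (1:ℝ))).1 i
              * fderiv ℝ h x (EuclideanSpace.single i 1))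
        + ∑ i : Fin n, (ψ (x, h x)).1 i * fderiv ℝ g x (EuclideanSpace.single i 1) := by
      rw [hS, Finset.mul_sum, Finset.mul_sum, ← Finset.sum_add_distrib,
        ← Finset.sum_add_distrib]
      refine Finset.sum_congr rfl fun i _ => ?_
      rw [hform i x]
      simp only [hu]
      ring
    rw [hSx, e1, e2]
    ring
  -- conclusion
  have hfun : (fun x =>
      (⟪(fderiv ℝ ψ (x, h x) ((0 : EuclideanSpace ℝ (Fin n)), (1 : ℝ))).1,
          -gradient h x⟫
        + (fderiv ℝ ψ (x, h x) ((0 : EuclideanSpace ℝ (Fin n)), (1 : ℝ))).2) * g x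
        + ⟪(ψ (x, h x)).1, -gradient g x⟫)
      = fun x =>
        ((∑ i : Fin n, (fderiv ℝ ψ (x, h x) (EuclideanSpace.single i 1, (0 : ℝ))).1 i)
          + (fderiv ℝ ψ (x, h x) ((0 : EuclideanSpace ℝ (Fin n)), (1 : ℝ))).2) * g x
        - S x := funext point
  rw [hfun, integral_sub IR hSint, hS0, sub_zero]
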